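/- arXiv:1412.6836 — 2 statements merged into one kernel-verified Lean document; each statement's English description precedes it below -/
import Mathlib

section
/- Let R be a commutative ring, let A : R → Mₙ(R[t]) be given by a polynomial family of matrices, and suppose there exists Y ∈ Mₙ(R) with dA/dt = −(A·Y − Y·A) (derivative taken entrywise). Then d/dt (det A) = 0, i.e. det(A(t)) is a constant polynomial in t. -/
open Polynomial

section Aux

open Matrix Finset

variable {R : Type*} [CommRing R]

private lemma derivative_finset_prod' {ι : Type*} [DecidableEq ι] (s : Finset ι) (f : ι → R[X]) :
    derivative (∏ i ∈ s, f i) = ∑ i ∈ s, (∏ j ∈ s.erase i, f j) * derivative (f i) := by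
  induction s using Finset.induction with
  | empty => simp
  | @insert a s ha ih =>
    rw [Finset.prod_insert ha, derivative_mul, ih, Finset.sum_insert ha,
      Finset.erase_insert ha, Finset.mul_sum]
    congr 1
    · ring
    · refine Finset.sum_congr rfl fun i hi => ?_
      rw [Finset.erase_insert_of_ne (by rintro rfl; exact ha hi),
        Finset.prod_insert (by intro h; exact ha (Finset.mem_of_mem_erase h))]
      ring

private lemma derivative_det_eq_sum' {m : Type*} [DecidableEq m] [Fintype m]
    (A : Matrix m m R[X]) :
    derivative A.det = ∑ j, (A.updateCol j fun i => derivative (A i j)).det := by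
  simp only [Matrix.det_apply', derivative_sum, derivative_mul, derivative_intCast,
    zero_mul, zero_add]
  rw [Finset.sum_comm]
  refine Finset.sum_congr rfl fun σ _ => ?_
  rw [derivative_finset_prod', Finset.mul_sum]
  refine Finset.sum_congr rfl fun j _ => ?_
  have h : ∏ i, A.updateCol j (fun i => derivative (A i j)) (σ i) i
      = derivative (A (σ j) j) * ∏ i ∈ Finset.univ.erase j, A (σ i) i := by
    rw [← Finset.mul_prod_erase Finset.univ _ (Finset.mem_univ j),
      Matrix.updateCol_apply, if_pos rfl]
    exact congrArg _ (Finset.prod_congr rfl fun i hi => by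
      rw [Matrix.updateCol_apply, if_neg (Finset.ne_of_mem_erase hi)])
  rw [h]
  ring

/-- Jacobi's formula over a commutative ring. -/
private lemma jacobi_formula' {m : Type*} [DecidableEq m] [Fintype m]
    (A : Matrix m m R[X]) :
    derivative A.det = Matrix.trace (A.adjugate * A.map fun q => derivative q) := by
  rw [derivative_det_eq_sum', Matrix.trace]
  refine Finset.sum_congr rfl fun j _ => ?_
  rw [← Matrix.cramer_apply, Matrix.cramer_eq_adjugate_mulVec]
  simp [Matrix.mulVec, Matrix.mul_apply, Matrix.diag, dotProduct, Matrix.map_apply]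

end Aux

/-- If a polynomial family of matrices `A(t)` satisfies `dA/dt = -[A, Y]` for a
constant matrix `Y`, then `det A(t)` is constant in `t`. -/
theorem det_constant_of_derivative_eq_neg_commutator
    {R : Type*} [CommRing R] {n : ℕ}
    (A : Matrix (Fin n) (Fin n) (Polynomial R))
    (Y : Matrix (Fin n) (Fin n) R)
    (hA : A.map (fun q => derivative q) = -(A * Y.map C - Y.map C * A)) :
    derivative A.det = 0 := by
  rw [jacobi_formula', hA]
  have h1 : A.adjugate * -(A * Y.map C - Y.map C * A)
      = A.adjugate * Y.map C * A - A.adjugate * A * Y.map C := by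
    noncomm_ring
  rw [h1, Matrix.trace_sub, Matrix.trace_mul_cycle,
    Matrix.mul_adjugate, Matrix.adjugate_mul, sub_self]
end

section
/- Let k be a field of characteristic p > 0 and let A be the k-algebra of k-linear endomorphisms of k[X]/(X^p). Then A is generated as a k-algebra by the two operators x (multiplication by X) and d (formal derivative), which satisfy [d, x] = 1, x^p = 0, d^p = 0; moreover A is isomorphic as a k-algebra to M_p(k), the p×p matrix algebra. -/
open Polynomial

set_option maxHeartbeats 1000000
set_option synthInstance.maxHeartbeats 200000

/-- Over a field `k` of characteristic `p`, the algebra of `k`-linear endomorphisms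
of `k[X]/(X^p)` is generated by the multiplication operator `x` and the derivative
operator `d`, which satisfy `[d,x] = 1`, `x^p = 0`, `d^p = 0`; and it is isomorphic
as a `k`-algebra to the matrix algebra `M_p(k)`. -/
theorem endomorphisms_of_truncated_polynomials
    (p : ℕ) [Fact p.Prime] (k : Type*) [Field k] [CharP k p]
    (x d : Module.End k (Polynomial k ⧸ Ideal.span {(X : Polynomial k) ^ p}))
    (hx : ∀ f : Polynomial k,
      x (Ideal.Quotient.mk (Ideal.span {(X : Polynomial k) ^ p}) f) =
        Ideal.Quotient.mk (Ideal.span {(X : Polynomial k) ^ p}) (X * f))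
    (hd : ∀ f : Polynomial k,
      d (Ideal.Quotient.mk (Ideal.span {(X : Polynomial k) ^ p}) f) =
        Ideal.Quotient.mk (Ideal.span {(X : Polynomial k) ^ p}) (derivative f)) :
    (d * x - x * d = 1 ∧ x ^ p = 0 ∧ d ^ p = 0) ∧
    Algebra.adjoin k {x, d} = ⊤ ∧
    Nonempty ((Module.End k (Polynomial k ⧸ Ideal.span {(X : Polynomial k) ^ p}))
      ≃ₐ[k] Matrix (Fin p) (Fin p) k) := by
  classical
  have hp : p.Prime := Fact.out
  -- notation for the quotient map
  let mk : Polynomial k →ₐ[k] Polynomial k ⧸ Ideal.span {(X : Polynomial k) ^ p} :=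
    Ideal.Quotient.mkₐ k (Ideal.span {(X : Polynomial k) ^ p})
  have hx' : ∀ f : Polynomial k, x (mk f) = mk (X * f) := hx
  have hd' : ∀ f : Polynomial k, d (mk f) = mk (derivative f) := hd
  have hsurj : Function.Surjective mk := Ideal.Quotient.mkₐ_surjective k _
  -- scalars pass through mk
  have hsm : ∀ (a : k) (f : Polynomial k), mk (a • f) = a • mk f :=
    fun a f => map_smul mk a f
  -- powers of x
  have hxn : ∀ (n : ℕ) (f : Polynomial k), (x ^ n) (mk f) = mk (X ^ n * f) := by
    intro n
    induction n with
    | zero => intro f; simp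
    | succ n ih =>
      intro f
      rw [pow_succ, Module.End.mul_apply, hx', ih]
      ring_nf
  -- powers of d
  have hdn : ∀ (n : ℕ) (f : Polynomial k), (d ^ n) (mk f) = mk (derivative^[n] f) := by
    intro n
    induction n with
    | zero => intro f; simp
    | succ n ih =>
      intro f
      rw [pow_succ, Module.End.mul_apply, hd', ih, Function.iterate_succ_apply]
  -- the three relations
  have h1 : d * x - x * d = 1 := by
    refine LinearMap.ext fun q => ?_
    obtain ⟨f, rfl⟩ := hsurj q
    simp only [LinearMap.sub_apply, Module.End.mul_apply, Module.End.one_apply, hx', hd',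
      derivative_mul, derivative_X, one_mul, map_add]
    ring
  have h2 : x ^ p = 0 := by
    refine LinearMap.ext fun q => ?_
    obtain ⟨f, rfl⟩ := hsurj q
    rw [hxn, LinearMap.zero_apply]
    exact Ideal.Quotient.eq_zero_iff_mem.2 (Ideal.mem_span_singleton.2 (dvd_mul_right _ _))
  -- the power basis of the quotient
  have hX0 : (X : Polynomial k) ^ p ≠ 0 := pow_ne_zero _ X_ne_zero
  let pb := AdjoinRoot.powerBasis hX0
  have hdim : pb.dim = p := by simp [pb, AdjoinRoot.powerBasis, natDegree_X_pow]
  let b : Module.Basis (Fin p) k (Polynomial k ⧸ Ideal.span {(X : Polynomial k) ^ p}) := pb.basis.reindex (finCongr hdim)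
  have hb : ∀ l : Fin p, b l = mk (X ^ (l : ℕ)) := by
    intro l
    rw [show b l = pb.basis ((finCongr hdim).symm l) from Module.Basis.reindex_apply pb.basis (finCongr hdim) l,
      PowerBasis.coe_basis]
    show pb.gen ^ (((finCongr hdim).symm l : Fin pb.dim) : ℕ) = mk (X ^ (l : ℕ))
    have hcast : (((finCongr hdim).symm l : Fin pb.dim) : ℕ) = (l : ℕ) := by simp
    rw [show pb.gen = mk X from rfl, hcast, map_pow]
    rfl
  have h3 : d ^ p = 0 := by
    refine b.ext fun l => ?_
    rw [hb, hdn, LinearMap.zero_apply,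
      Polynomial.iterate_derivative_eq_zero (by rw [natDegree_X_pow]; exact l.2), map_zero]
  -- eigenvector computation for t = x * d
  have ht : ∀ n : ℕ, (x * d) (mk (X ^ n)) = (n : k) • mk (X ^ n) := by
    intro n
    rw [Module.End.mul_apply, hd', derivative_X_pow, ← smul_eq_C_mul, hsm, map_smul,
      hx']
    cases n with
    | zero => simp
    | succ m =>
      congr 2
      rw [Nat.add_sub_cancel, ← pow_succ']
  -- powers of t on eigenvectors
  have htm : ∀ (m n : ℕ), ((x * d) ^ m) (mk (X ^ n)) = ((n : k) ^ m) • mk (X ^ n) := by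
    intro m n
    induction m with
    | zero => simp
    | succ m ih =>
      rw [pow_succ, Module.End.mul_apply, ht, map_smul, ih, smul_smul, pow_succ]
      rw [mul_comm]
  -- evaluation of polynomials in t on eigenvectors
  have haev : ∀ (q : Polynomial k) (n : ℕ),
      (aeval (x * d) q) (mk (X ^ n)) = q.eval (n : k) • mk (X ^ n) := by
    intro q n
    induction q using Polynomial.induction_on' with
    | add f g hf hg => rw [map_add, LinearMap.add_apply, hf, hg, eval_add, add_smul]
    | monomial m a =>
      rw [aeval_monomial, eval_monomial, Module.End.mul_apply, htm, map_smul,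
        Module.algebraMap_end_apply, smul_smul, mul_comm]
  set P : Module.End k (Polynomial k ⧸ Ideal.span {(X : Polynomial k) ^ p}) :=
    aeval (x * d) (∏ c ∈ Finset.Ico 1 p, (1 - C (c : k)⁻¹ * X)) with hP
  have hP0 : P (mk (X ^ 0)) = mk (X ^ 0) := by
    rw [hP, haev, eval_prod]
    simp
  have hPn : ∀ n : ℕ, 1 ≤ n → n < p → P (mk (X ^ n)) = 0 := by
    intro n h1n hnp
    rw [hP, haev, eval_prod, Finset.prod_eq_zero (Finset.mem_Ico.2 ⟨h1n, hnp⟩), zero_smul]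
    have hn0 : (n : k) ≠ 0 := by
      rw [Ne, CharP.cast_eq_zero_iff k p]
      exact Nat.not_dvd_of_pos_of_lt (by omega) hnp
    rw [eval_sub, eval_one, eval_mul, eval_C, eval_X, inv_mul_cancel₀ hn0, sub_self]
  -- the "matrix unit" operators
  have hF : ∀ i j l : Fin p,
      (x ^ (i : ℕ) * (P * d ^ (j : ℕ))) (b l) =
        if l = j then (Nat.factorial j : k) • b i else 0 := by
    intro i j l
    rw [hb, Module.End.mul_apply, Module.End.mul_apply, hdn,
      iterate_derivative_X_pow_eq_smul, hsm, map_smul, map_smul]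
    by_cases hlj : l = j
    · subst hlj
      rw [if_pos rfl, Nat.sub_self, hP0, Nat.descFactorial_self, hxn, pow_zero, mul_one, hb]
    · rw [if_neg hlj]
      rcases lt_or_gt_of_ne (fun h : (l : ℕ) = (j : ℕ) => hlj (Fin.ext h)) with h | h
      · rw [Nat.descFactorial_eq_zero_iff_lt.2 h]
        simp
      · rw [hPn ((l : ℕ) - j) (by omega) (by have := l.2; omega)]
        simp
  -- every endomorphism is a combination of these operators
  have key : ∀ f : Module.End k (Polynomial k ⧸ Ideal.span {(X : Polynomial k) ^ p}),
      f = ∑ j : Fin p, ∑ i : Fin p,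
        b.repr (f (b j)) i • ((Nat.factorial j : k)⁻¹ • (x ^ (i : ℕ) * (P * d ^ (j : ℕ)))) := by
    intro f
    refine b.ext fun l => ?_
    have hfac : ((Nat.factorial l : k))⁻¹ * (Nat.factorial l : k) = 1 := by
      refine inv_mul_cancel₀ ?_
      rw [Ne, CharP.cast_eq_zero_iff k p, hp.dvd_factorial]
      exact fun h => absurd l.2 (not_lt.2 h)
    rw [LinearMap.sum_apply]
    simp only [LinearMap.sum_apply, LinearMap.smul_apply, hF, smul_ite, smul_zero]
    rw [Finset.sum_comm]
    have : ∀ i : Fin p, (∑ j : Fin p, if l = j then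
        b.repr (f (b j)) i • ((Nat.factorial j : k)⁻¹ • ((Nat.factorial j : k) • b i)) else 0)
        = b.repr (f (b l)) i • b i := by
      intro i
      rw [Finset.sum_ite_eq Finset.univ l
        (fun j => b.repr (f (b j)) i • ((Nat.factorial j : k)⁻¹ • ((Nat.factorial j : k) • b i)))]
      rw [if_pos (Finset.mem_univ l), smul_smul, smul_smul, mul_assoc, hfac, mul_one]
    simp only [this]
    exact (b.sum_repr (f (b l))).symm
  refine ⟨⟨h1, h2, h3⟩, ?_, ⟨algEquivMatrix b⟩⟩
  -- generation
  rw [eq_top_iff]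
  intro f _
  have hxA : x ∈ Algebra.adjoin k {x, d} := Algebra.subset_adjoin (Set.mem_insert _ _)
  have hdA : d ∈ Algebra.adjoin k {x, d} :=
    Algebra.subset_adjoin (Set.mem_insert_of_mem _ rfl)
  have hPA : P ∈ Algebra.adjoin k {x, d} := by
    have h1 : P ∈ Algebra.adjoin k {x * d} := by
      rw [Algebra.adjoin_singleton_eq_range_aeval]
      exact ⟨_, rfl⟩
    exact Algebra.adjoin_le (Set.singleton_subset_iff.2 (mul_mem hxA hdA)) h1
  rw [key f]
  exact sum_mem fun j _ => sum_mem fun i _ =>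
    Subalgebra.smul_mem _ (Subalgebra.smul_mem _
      (mul_mem (pow_mem hxA _) (mul_mem hPA (pow_mem hdA _))) _) _
end
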